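/- Let g and h be Leibniz algebras and let L = ⊕_k C^k_>(g⊕h, h) be the graded subspace of cochains on the direct sum Leibniz algebra g⊕h with values in h that vanish when all arguments lie in h (complementary to C(h,h)). Then L is closed under the graded commutator bracket [·,·]_C and under the differential ∂̄ = [μ_g + μ_h, ·]_C, so (L, [·,·]_C, ∂̄) is a sub-DGLA of (C(g⊕h, g⊕h), [·,·]_C, ∂̄); moreover its degree-0 part L₀ = Hom(g,h) is an abelian subalgebra. -/
import Mathlib


/-- A `(k,q)`-unshuffle: a permutation of `Fin (k+q)` that is increasing on
the first `k` positions and on the last `q` positions. -/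
def IsUnshuffle (k q : ℕ) (σ : Equiv.Perm (Fin (k + q))) : Prop :=
  (∀ i j : Fin (k + q), i < j → (j : ℕ) < k → σ i < σ j) ∧
  (∀ i j : Fin (k + q), i < j → k ≤ (i : ℕ) → σ i < σ j)

instance (k q : ℕ) (σ : Equiv.Perm (Fin (k + q))) :
    Decidable (IsUnshuffle k q σ) := by
  unfold IsUnshuffle; infer_instance

/-- The Balavoine composition `P ∘ Q` of Leibniz-algebra cochains:
for `P ∈ C^p = Hom(⊗^{p+1} A, A)` and `Q ∈ C^q`,
`(P∘Q)(x₁,…,x_{p+q+1}) = Σ_{k=0}^{p} (-1)^{kq} Σ_{σ ∈ Sh(k,q)} sgn(σ)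
P(x_{σ(1)},…,x_{σ(k)}, Q(x_{σ(k+1)},…,x_{σ(k+q)}, x_{k+q+1}),
x_{k+q+2},…,x_{p+q+1})`. -/
def cochainComp {A : Type*} [AddCommGroup A] (p q : ℕ)
    (P : (Fin (p + 1) → A) → A) (Q : (Fin (q + 1) → A) → A) :
    (Fin (p + q + 1) → A) → A := fun x =>
  ∑ k : Fin (p + 1), ∑ σ ∈ Finset.univ.filter (IsUnshuffle (k : ℕ) q),
    ((-1 : ℤ) ^ ((k : ℕ) * q) * (Equiv.Perm.sign σ : ℤ)) •
      P (fun jj : Fin (p + 1) =>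
        if h1 : (jj : ℕ) < (k : ℕ) then
          x (Fin.castLE (by have := k.isLt; omega)
              (σ ⟨(jj : ℕ), by omega⟩))
        else if (jj : ℕ) = (k : ℕ) then
          Q (fun i : Fin (q + 1) =>
            if h3 : (i : ℕ) < q then
              x (Fin.castLE (by have := k.isLt; omega)
                  (σ ⟨(k : ℕ) + (i : ℕ), by omega⟩))
            else x ⟨(k : ℕ) + q, by have := k.isLt; omega⟩)
        else x ⟨(jj : ℕ) + q, by have := jj.isLt; omega⟩)

/-- The graded commutator bracket
`[P,Q]_C = P∘Q + (-1)^{pq+1} Q∘P` on Leibniz cochains. -/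
def cochainBracket {A : Type*} [AddCommGroup A] (p q : ℕ)
    (P : (Fin (p + 1) → A) → A) (Q : (Fin (q + 1) → A) → A) :
    (Fin (p + q + 1) → A) → A := fun x =>
  cochainComp p q P Q x +
    ((-1 : ℤ) ^ (p * q + 1)) •
      cochainComp q p Q P (fun i => x (Fin.cast (by omega) i))

/-- The differential `∂̄ = [μ, ·]_C` on cochains, where `μ ∈ C¹` is a
Leibniz algebra structure (written with a cast so that `∂̄` raises degree by
one). -/
def deltaBar {A : Type*} [AddCommGroup A] (p : ℕ)
    (μ : (Fin 2 → A) → A) (P : (Fin (p + 1) → A) → A) :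
    (Fin (p + 1 + 1) → A) → A := fun x =>
  cochainBracket 1 p μ P (fun i => x (Fin.cast (by omega) i))

variable {K : Type*} [Field K]
  {g : Type*} [AddCommGroup g] [Module K g]
  {h : Type*} [AddCommGroup h] [Module K h]

/-- The 1-cochain `μ_g + μ_h` on the direct sum Leibniz algebra `g ⊕ h`. -/
def muSum (Bg : g →ₗ[K] g →ₗ[K] g) (Bh : h →ₗ[K] h →ₗ[K] h) :
    (Fin 2 → g × h) → g × h := fun x =>
  (Bg (x 0).1 (x 1).1, Bh (x 0).2 (x 1).2)

/-- Membership in `L_p = C^p_>(g⊕h, h)`: cochains with values in `h` that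
vanish whenever all arguments lie in `h`. -/
def InL (p : ℕ) (P : (Fin (p + 1) → g × h) → g × h) : Prop :=
  (∀ x, (P x).1 = 0) ∧ (∀ x, (∀ i, (x i).1 = 0) → P x = 0)

section Aux

/-- Master vanishing lemma for the Balavoine composition: if `f (P v) = 0`
for every tuple `v` whose entries away from a slot `i` are entries of `x`,
whose slot `i` is `Q y` for a tuple `y` of entries of `x`, then
`f ((P ∘ Q) x) = 0`. -/
lemma cochainComp_apply_eq_zero {A : Type*} [AddCommGroup A]
    {M : Type*} [AddCommGroup M] (f : A →+ M) (p q : ℕ)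
    (P : (Fin (p + 1) → A) → A) (Q : (Fin (q + 1) → A) → A)
    (x : Fin (p + q + 1) → A)
    (H : ∀ (v : Fin (p + 1) → A) (i : Fin (p + 1)) (y : Fin (q + 1) → A),
      (∀ j, j ≠ i → ∃ t, v j = x t) → (∀ t, ∃ s, y t = x s) → v i = Q y →
      f (P v) = 0) :
    f (cochainComp p q P Q x) = 0 := by
  unfold cochainComp
  rw [map_sum]
  refine Finset.sum_eq_zero fun k _ => ?_
  rw [map_sum]
  refine Finset.sum_eq_zero fun σ _ => ?_
  rw [map_zsmul, H _ k (fun i : Fin (q + 1) =>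
        if h3 : (i : ℕ) < q then
          x (Fin.castLE (by have := k.isLt; omega)
              (σ ⟨(k : ℕ) + (i : ℕ), by omega⟩))
        else x ⟨(k : ℕ) + q, by have := k.isLt; omega⟩) ?_ ?_ ?_, smul_zero]
  · intro j hj
    by_cases h1 : (j : ℕ) < (k : ℕ)
    · exact ⟨_, by rw [dif_pos h1]⟩
    · have h2 : ¬ ((j : ℕ) = (k : ℕ)) := fun hh => hj (Fin.ext hh)
      exact ⟨_, by rw [dif_neg h1, if_neg h2]⟩
  · intro t
    by_cases h3 : (t : ℕ) < q
    · exact ⟨_, dif_pos h3⟩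
    · exact ⟨_, dif_neg h3⟩
  · rw [dif_neg (lt_irrefl ((k : ℕ)))]
    rw [if_pos rfl]

lemma cochainComp_eq_zero {A : Type*} [AddCommGroup A] (p q : ℕ)
    (P : (Fin (p + 1) → A) → A) (Q : (Fin (q + 1) → A) → A)
    (x : Fin (p + q + 1) → A)
    (H : ∀ (v : Fin (p + 1) → A) (i : Fin (p + 1)) (y : Fin (q + 1) → A),
      (∀ j, j ≠ i → ∃ t, v j = x t) → (∀ t, ∃ s, y t = x s) → v i = Q y →
      P v = 0) :
    cochainComp p q P Q x = 0 :=
  cochainComp_apply_eq_zero (AddMonoidHom.id A) p q P Q x H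

lemma cochainComp_fst_eq_zero {g' h' : Type*} [AddCommGroup g'] [AddCommGroup h']
    (p q : ℕ)
    (P : (Fin (p + 1) → g' × h') → g' × h') (Q : (Fin (q + 1) → g' × h') → g' × h')
    (x : Fin (p + q + 1) → g' × h')
    (H : ∀ (v : Fin (p + 1) → g' × h') (i : Fin (p + 1)) (y : Fin (q + 1) → g' × h'),
      (∀ j, j ≠ i → ∃ t, v j = x t) → (∀ t, ∃ s, y t = x s) → v i = Q y →
      (P v).1 = 0) :
    (cochainComp p q P Q x).1 = 0 :=
  cochainComp_apply_eq_zero (AddMonoidHom.fst g' h') p q P Q x H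

end Aux

/-- Lemma 4.2: `L = ⊕ₖ C^k_>(g⊕h, h)` is closed under the graded bracket
`[·,·]_C` and under the differential `∂̄ = [μ_g + μ_h, ·]_C`, hence is a
sub-DGLA of `(C(g⊕h, g⊕h), [·,·]_C, ∂̄)`; moreover its degree-0 part
`L₀ = Hom(g, h)` is abelian. -/
theorem L_is_sub_DGLA
    (Bg : g →ₗ[K] g →ₗ[K] g)
    (hg : ∀ x y z : g, Bg x (Bg y z) = Bg (Bg x y) z + Bg y (Bg x z))
    (Bh : h →ₗ[K] h →ₗ[K] h)
    (hh : ∀ a b c : h, Bh a (Bh b c) = Bh (Bh a b) c + Bh b (Bh a c)) :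
    -- closed under the graded bracket
    (∀ (p q : ℕ) (P : (Fin (p + 1) → g × h) → g × h)
        (Q : (Fin (q + 1) → g × h) → g × h),
      InL p P → InL q Q → InL (p + q) (cochainBracket p q P Q)) ∧
    -- closed under the differential
    (∀ (p : ℕ) (P : (Fin (p + 1) → g × h) → g × h),
      InL p P → InL (p + 1) (deltaBar p (muSum Bg Bh) P)) ∧
    -- the degree-0 part is abelian
    (∀ P Q : (Fin 1 → g × h) → g × h, InL 0 P → InL 0 Q →
      ∀ x, cochainBracket 0 0 P Q x = 0) := by
  refine ⟨?_, ?_, ?_⟩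
  · -- closed under the bracket
    rintro p q P Q ⟨hP1, hP2⟩ ⟨hQ1, hQ2⟩
    constructor
    · intro x
      simp only [cochainBracket, Prod.fst_add, Prod.smul_fst]
      rw [cochainComp_fst_eq_zero p q P Q x (fun v _ _ _ _ _ => hP1 v),
        cochainComp_fst_eq_zero q p Q P _ (fun v _ _ _ _ _ => hQ1 v),
        smul_zero, add_zero]
    · intro x hx
      simp only [cochainBracket]
      rw [cochainComp_eq_zero p q P Q x ?_, cochainComp_eq_zero q p Q P _ ?_,
        smul_zero, add_zero]
      · intro v i y hv hy hvi
        refine hQ2 v fun j => ?_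
        by_cases hji : j = i
        · subst hji; rw [hvi]; exact hP1 y
        · obtain ⟨t, ht⟩ := hv j hji; rw [ht]; exact hx _
      · intro v i y hv hy hvi
        refine hP2 v fun j => ?_
        by_cases hji : j = i
        · subst hji; rw [hvi]; exact hQ1 y
        · obtain ⟨t, ht⟩ := hv j hji; rw [ht]; exact hx t
  · -- closed under the differential
    rintro p P ⟨hP1, hP2⟩
    constructor
    · intro x
      simp only [deltaBar, cochainBracket, Prod.fst_add, Prod.smul_fst]
      rw [cochainComp_fst_eq_zero _ _ _ _ _ ?_,
        cochainComp_fst_eq_zero _ _ _ _ _ (fun v _ _ _ _ _ => hP1 v),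
        smul_zero, add_zero]
      intro v i y _ _ hvi
      have h0 : (v i).1 = 0 := by rw [hvi]; exact hP1 y
      have h01 : (v 0).1 = 0 ∨ (v 1).1 = 0 := by
        obtain ⟨iv, hiv⟩ := i
        rcases (by omega : iv = 0 ∨ iv = 1) with rfl | rfl
        · exact Or.inl h0
        · exact Or.inr h0
      show Bg (v 0).1 (v 1).1 = 0
      rcases h01 with hz | hz <;> rw [hz] <;> simp
    · intro x hx
      simp only [deltaBar, cochainBracket]
      rw [cochainComp_eq_zero _ _ _ _ _ ?_, cochainComp_eq_zero _ _ _ _ _ ?_,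
        smul_zero, add_zero]
      · -- P ∘ μ part
        intro v i y hv hy hvi
        refine hP2 v fun j => ?_
        by_cases hji : j = i
        · subst hji; rw [hvi]
          show Bg (y 0).1 (y 1).1 = 0
          have h0 : (y 0).1 = 0 := by
            obtain ⟨s, hs⟩ := hy 0; rw [hs]; exact hx _
          rw [h0]; simp
        · obtain ⟨t, ht⟩ := hv j hji; rw [ht]; exact hx _
      · -- μ ∘ P part
        intro v i y hv hy hvi
        have hy' : ∀ t, (y t).1 = 0 := fun t => by
          obtain ⟨s, hs⟩ := hy t; rw [hs]; exact hx _
        have h0 : v i = 0 := by rw [hvi]; exact hP2 y hy'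
        have h01 : v 0 = 0 ∨ v 1 = 0 := by
          obtain ⟨iv, hiv⟩ := i
          rcases (by omega : iv = 0 ∨ iv = 1) with rfl | rfl
          · exact Or.inl h0
          · exact Or.inr h0
        show ((Bg (v 0).1 (v 1).1, Bh (v 0).2 (v 1).2) : g × h) = 0
        rcases h01 with hz | hz <;> rw [hz] <;> simp [Prod.ext_iff]
  · -- degree-0 part is abelian
    rintro P Q ⟨hP1, hP2⟩ ⟨hQ1, hQ2⟩ x
    simp only [cochainBracket]
    rw [cochainComp_eq_zero _ _ _ _ _ ?_, cochainComp_eq_zero _ _ _ _ _ ?_,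
      smul_zero, add_zero]
    · intro v i y _ _ hvi
      refine hQ2 v fun j => ?_
      rw [(Fin.ext (by omega) : j = i), hvi]; exact hP1 y
    · intro v i y _ _ hvi
      refine hP2 v fun j => ?_
      rw [(Fin.ext (by omega) : j = i), hvi]; exact hQ1 y
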